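/- Let d ≥ 2 and n ≥ 0 be integers, let v' be a level-n distribution vector of X_E^{×d} (i.e., v' = π_n(t) for some t ∈ X_E^{×d}), and let Q ∈ Υ_A be such that (v',Q) is typical. Then there exists Q' ∈ Υ_A such that ((v', Q'v'), Q') ∈ Γ*_n^{n+1}, Q'_{a,b} = 0 whenever Q_{a,b} = 0, Q'_{a,b} = Q_{a,b} whenever v'_b = 0, and |Q_{a,b} − Q'_{a,b}| ≤ 1/(|Δ_{n+1}|·v'_b) for all a,b ∈ A with v'_b > 0. -/

import Mathlib

open Filter Topology

/-- Assumption (A): `E` has nonnegative entries with all column sums and row sums positive. -/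
def AssumptionA {A : Type*} [Fintype A] (E : Matrix A A ℝ) : Prop :=
  (∀ a b, 0 ≤ E a b) ∧ (∀ b, 0 < ∑ a, E a b) ∧ (∀ a, 0 < ∑ b, E a b)

/-- A column-stochastic matrix: nonnegative entries, each column sums to `1`. -/
def IsColStochastic {A : Type*} [Fintype A] (P : Matrix A A ℝ) : Prop :=
  (∀ a b, 0 ≤ P a b) ∧ ∀ b, ∑ a, P a b = 1

/-- The hom tree-shift `X_E^{×d}` on the rooted `d`-tree, whose vertices are the finite
words over `Fin d` (the empty word is the root, and the children of `g` are `g ++ [i]`). -/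
def treeX {A : Type*} (d : ℕ) (E : Matrix A A ℝ) : Set (List (Fin d) → A) :=
  {t | ∀ g : List (Fin d), ∀ i : Fin d, 0 < E (t (g ++ [i])) (t g)}

/-- The level-`n` distribution vector `π_n(t)`: frequencies of each symbol on level `n`. -/
noncomputable def pivec {A : Type*} (d n : ℕ) (t : List (Fin d) → A) : A → ℝ :=
  fun a => (Nat.card {g : List (Fin d) // g.length = n ∧ t g = a} : ℝ) / (d : ℝ) ^ n

/-- The transition matrix `Q_n(t)` from level `n` to level `n+1`: `Q_n(t)_{a,b}` is the
proportion of vertices labeled `a` among all children of level-`n` vertices labeled `b`,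
and `E_{a,b}/Σ_c E_{c,b}` if no level-`n` vertex is labeled `b`. -/
noncomputable def Qmat {A : Type*} [Fintype A] (d : ℕ) (E : Matrix A A ℝ) (n : ℕ)
    (t : List (Fin d) → A) : Matrix A A ℝ :=
  fun a b =>
    if Nat.card {g : List (Fin d) // g.length = n ∧ t g = b} = 0 then
      E a b / ∑ c, E c b
    else
      (Nat.card {p : List (Fin d) × Fin d //
          p.1.length = n ∧ t p.1 = b ∧ t (p.1 ++ [p.2]) = a} : ℝ) /
        ((d : ℝ) * (Nat.card {g : List (Fin d) // g.length = n ∧ t g = b} : ℝ))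

/-- A pair `(v,Q)` is typical with respect to `E`. -/
def Typical {A : Type*} [Fintype A] (E : Matrix A A ℝ) (v : A → ℝ)
    (Q : Matrix A A ℝ) : Prop :=
  (∀ a b, E a b = 0 → Q a b = 0) ∧ ∀ a b, v b = 0 → Q a b = E a b / ∑ c, E c b


open Finset

section Aux

variable {α A : Type*}

/-- Counting a subtype via a Finset filter. -/
lemma nat_card_subtype (s : Finset α) (p q : α → Prop) [DecidablePred p]
    (h : ∀ x, q x ↔ x ∈ s) :
    Nat.card {x // q x ∧ p x} = (s.filter p).card := by
  rw [← Nat.card_eq_finsetCard]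
  exact Nat.card_congr (Equiv.subtypeEquivRight (by simp [h, Finset.mem_filter]))

/-- Lists of length `n` over `Fin d` as a Finset. -/
def LnF (d n : ℕ) : Finset (List (Fin d)) :=
  (Finset.univ : Finset (Fin n → Fin d)).image List.ofFn

lemma mem_LnF {d n : ℕ} (g : List (Fin d)) : g ∈ LnF d n ↔ g.length = n := by
  constructor
  · intro h
    obtain ⟨f, -, rfl⟩ := Finset.mem_image.1 h
    simp
  · intro h
    subst h
    exact Finset.mem_image.2 ⟨g.get, Finset.mem_univ _, List.ofFn_get g⟩

lemma card_LnF (d n : ℕ) : (LnF d n).card = d ^ n := by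
  rw [LnF, Finset.card_image_of_injective _ List.ofFn_injective, Finset.card_univ]
  simp [Fintype.card_fun]

/-- Rounding a probability vector to integer counts at scale `M`. -/
lemma rounding [Fintype A] (q : A → ℝ) (hq0 : ∀ a, 0 ≤ q a) (hq1 : ∑ a, q a = 1)
    (M : ℕ) (hM : 0 < M) :
    ∃ k : A → ℕ, (∑ a, k a = M) ∧ (∀ a, q a = 0 → k a = 0) ∧
      ∀ a, |(M : ℝ) * q a - k a| ≤ 1 := by
  classical
  set f : A → ℕ := fun a => ⌊(M : ℝ) * q a⌋₊ with hf
  have hfle : ∀ a, (f a : ℝ) ≤ M * q a := fun a =>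
    Nat.floor_le (mul_nonneg (Nat.cast_nonneg M) (hq0 a))
  have hflt : ∀ a, (M : ℝ) * q a < f a + 1 := fun a => Nat.lt_floor_add_one _
  have hMsum : ∑ a, (M : ℝ) * q a = M := by rw [← Finset.mul_sum, hq1, mul_one]
  have hsum : ∑ a, f a ≤ M := by
    have : ((∑ a, f a : ℕ) : ℝ) ≤ M := by
      push_cast
      calc ∑ a, (f a : ℝ) ≤ ∑ a, (M : ℝ) * q a := Finset.sum_le_sum fun a _ => hfle a
        _ = M := hMsum
    exact_mod_cast this
  set r : ℕ := M - ∑ a, f a with hr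
  set T0 : Finset A := Finset.univ.filter fun a => (f a : ℝ) < (M : ℝ) * q a with hT0
  have hrr : (r : ℝ) = ∑ a ∈ T0, ((M : ℝ) * q a - f a) := by
    have h1 : (r : ℝ) = ∑ a, ((M : ℝ) * q a - f a) := by
      rw [Finset.sum_sub_distrib, hMsum, hr]
      push_cast [hsum]; ring
    rw [h1, ← Finset.sum_filter_of_ne (fun a _ hne =>
      lt_of_le_of_ne (hfle a) (fun h => hne (by rw [h]; ring)))]
  have hrle : r ≤ T0.card := by
    rcases Nat.eq_zero_or_pos r with h | h
    · omega
    · have hT0ne : T0.Nonempty := by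
        by_contra hc
        rw [Finset.not_nonempty_iff_eq_empty] at hc
        rw [hc, Finset.sum_empty] at hrr
        have : (0:ℝ) < r := by exact_mod_cast h
        linarith
      have hlt : (r : ℝ) < T0.card := by
        rw [hrr]
        calc ∑ a ∈ T0, ((M : ℝ) * q a - f a) < ∑ a ∈ T0, 1 := by
              apply Finset.sum_lt_sum_of_nonempty hT0ne
              intro a ha
              have := hflt a; linarith
          _ = T0.card := by simp
      exact Nat.le_of_lt (by exact_mod_cast hlt)
  obtain ⟨T, hTsub, hTcard⟩ := Finset.exists_subset_card_eq hrle
  refine ⟨fun a => f a + if a ∈ T then 1 else 0, ?_, ?_, ?_⟩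
  · rw [Finset.sum_add_distrib]
    have : ∑ a, (if a ∈ T then 1 else 0) = T.card := by
      simp [Finset.sum_ite_mem, Finset.univ_inter]
    rw [this, hTcard, hr]
    omega
  · intro a ha
    have hf0 : f a = 0 := by simp [hf, ha]
    have hnT : a ∉ T := by
      intro hmem
      have := Finset.mem_filter.1 (hTsub hmem)
      rw [ha] at this
      rw [hf0] at this
      have h2 := this.2
      simp at h2
    simp [hf0, hnT]
  · intro a
    by_cases hmem : a ∈ T
    · have h1 := hfle a
      have h2 := hflt a
      simp only [hmem, if_true]
      rw [abs_le]
      push_cast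
      constructor <;> linarith
    · have h1 := hfle a
      have h2 := hflt a
      simp only [hmem, if_false]
      rw [abs_le]
      push_cast
      constructor <;> linarith

/-- A function with prescribed fiber cardinalities on a finite set. -/
lemma exists_fiber [DecidableEq α] [Fintype A] [DecidableEq A] [Nonempty A] :
    ∀ (m : ℕ) (s : Finset α) (k : A → ℕ), s.card = m → ∑ a, k a = s.card →
    ∃ f : α → A, ∀ a, (s.filter fun x => f x = a).card = k a := by
  intro m
  induction m with
  | zero =>
    intro s k hcard hsum
    have hs : s = ∅ := Finset.card_eq_zero.1 hcard
    subst hs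
    have hk : ∀ a, k a = 0 := by
      intro a
      rw [Finset.card_empty] at hsum
      exact Finset.sum_eq_zero_iff.1 hsum a (Finset.mem_univ a)
    exact ⟨fun _ => Classical.arbitrary A, fun a => by simp [hk a]⟩
  | succ m ih =>
    intro s k hcard hsum
    have hne : s.Nonempty := Finset.card_pos.1 (by omega)
    obtain ⟨x, hx⟩ := hne
    have hksum : ∑ a, k a = m + 1 := by rw [hsum, hcard]
    have : ∃ a₀, k a₀ ≠ 0 := by
      by_contra hc
      push_neg at hc
      rw [Finset.sum_eq_zero (fun a _ => hc a)] at hksum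
      omega
    obtain ⟨a₀, ha₀⟩ := this
    set k' : A → ℕ := Function.update k a₀ (k a₀ - 1) with hk'
    have hk'sum : ∑ a, k' a = (s.erase x).card := by
      rw [Finset.card_erase_of_mem hx, hcard]
      rw [hk', Finset.sum_update_of_mem (Finset.mem_univ a₀), Finset.sdiff_singleton_eq_erase]
      have h2 : k a₀ + ∑ y ∈ Finset.univ.erase a₀, k y = ∑ y, k y :=
        Finset.add_sum_erase _ k (Finset.mem_univ a₀)
      set S := ∑ y ∈ Finset.univ.erase a₀, k y with hS
      omega
    obtain ⟨f', hf'⟩ := ih (s.erase x) k' (by rw [Finset.card_erase_of_mem hx, hcard]; rfl) hk'sum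
    refine ⟨Function.update f' x a₀, fun a => ?_⟩
    have hagree : ∀ y ∈ s.erase x, (if Function.update f' x a₀ y = a then 1 else 0) = (if f' y = a then 1 else 0) := by
      intro y hy
      rw [Function.update_of_ne (Finset.ne_of_mem_erase hy)]
    rw [Finset.card_filter, ← Finset.add_sum_erase s _ hx,
      Finset.sum_congr rfl hagree, ← Finset.card_filter, hf' a]
    rw [Function.update_self]
    by_cases h : a₀ = a
    · subst h
      rw [if_pos rfl, hk', Function.update_self]
      omega
    · rw [if_neg h, hk', Function.update_of_ne (fun hc => h hc.symm)]
      omega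

end Aux


open Finset in
set_option maxHeartbeats 1600000 in
/-- discretization of a typical pair `(v',Q)` by a realizable transition
matrix `Q'` with entrywise error at most `1/(|Δ_{n+1}|·v'_b)`. -/
theorem stmt11 {A : Type*} [Fintype A] (d : ℕ) (hd : 2 ≤ d) (E : Matrix A A ℝ)
    (hE : AssumptionA E) (n : ℕ) (v' : A → ℝ)
    (hv : ∃ t ∈ treeX d E, v' = pivec d n t)
    (Q : Matrix A A ℝ) (hQ : IsColStochastic Q) (htyp : Typical E v' Q) :
    ∃ Q' : Matrix A A ℝ, IsColStochastic Q' ∧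
      (∃ t ∈ treeX d E, pivec d n t = v' ∧ pivec d (n + 1) t = Q'.mulVec v' ∧
        Qmat d E n t = Q') ∧
      (∀ a b, Q a b = 0 → Q' a b = 0) ∧
      (∀ a b, v' b = 0 → Q' a b = Q a b) ∧
      ∀ a b, 0 < v' b → |Q a b - Q' a b| ≤ 1 / ((d : ℝ) ^ (n + 1) * v' b) := by
  classical
  obtain ⟨hE1, hE2, hE3⟩ := hE
  replace hE : (∀ a b, 0 ≤ E a b) ∧ (∀ b, 0 < ∑ a, E a b) ∧ (∀ a, 0 < ∑ b, E a b) := ⟨hE1, hE2, hE3⟩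
  obtain ⟨hQ1, hQ2⟩ := hQ
  replace hQ : (∀ a b, 0 ≤ Q a b) ∧ (∀ b, ∑ a, Q a b = 1) := ⟨hQ1, hQ2⟩
  obtain ⟨ht1, ht2⟩ := htyp
  replace htyp : (∀ a b, E a b = 0 → Q a b = 0) ∧ (∀ a b, v' b = 0 → Q a b = E a b / ∑ c, E c b) := ⟨ht1, ht2⟩
  obtain ⟨t, ht, hveq⟩ := hv
  haveI : Nonempty A := ⟨t []⟩
  have hd0 : (0:ℕ) < d := by omega
  have hdR : (0:ℝ) < d := by exact_mod_cast hd0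
  have hnext : ∀ b : A, ∃ a, 0 < E a b := by
    intro b
    by_contra hc
    push_neg at hc
    have : ∑ a, E a b ≤ 0 := Finset.sum_nonpos (fun a _ => hc a)
    linarith [hE.2.1 b]
  choose next hnextp using hnext
  set N : A → ℕ := fun b => ((LnF d n).filter fun g => t g = b).card with hN
  set P : Finset (List (Fin d) × Fin d) := LnF d n ×ˢ Finset.univ with hP
  have hmemP : ∀ p : List (Fin d) × Fin d, p.1.length = n ↔ p ∈ P := by
    intro p; simp [hP, Finset.mem_product, mem_LnF]
  have hScard : ∀ b, (P.filter fun p => t p.1 = b).card = d * N b := by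
    intro b
    have heq : (P.filter fun p => t p.1 = b)
        = ((LnF d n).filter fun g => t g = b) ×ˢ Finset.univ := by
      ext p
      simp only [Finset.mem_filter, Finset.mem_product, Finset.mem_univ, and_true, hP]
    rw [heq, Finset.card_product, Finset.card_univ, Fintype.card_fin, hN, Nat.mul_comm]
  have hv'N : ∀ b, v' b = (N b : ℝ) / (d:ℝ)^n := by
    intro b
    have hcard := nat_card_subtype (LnF d n) (fun g => t g = b) (fun g => g.length = n)
      (fun g => (mem_LnF g).symm)
    rw [hveq]
    show (Nat.card {g : List (Fin d) // g.length = n ∧ t g = b} : ℝ) / (d:ℝ)^n = _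
    rw [hcard, hN]
  have hpow : (0:ℝ) < (d:ℝ)^n := by positivity
  have hv0iff : ∀ b, v' b = 0 ↔ N b = 0 := by
    intro b
    rw [hv'N b]
    rw [div_eq_zero_iff]
    simp [hpow.ne']
  have hkf : ∀ b : A, ∃ (k : A → ℕ) (f : List (Fin d) × Fin d → A),
      (∑ a, k a = d * N b) ∧ (∀ a, Q a b = 0 → k a = 0) ∧
      (0 < N b → ∀ a, |((d * N b : ℕ) : ℝ) * Q a b - k a| ≤ 1) ∧
      (∀ a, ((P.filter fun p => t p.1 = b).filter fun p => f p = a).card = k a) := by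
    intro b
    rcases Nat.eq_zero_or_pos (N b) with h0 | hpos
    · obtain ⟨f, hf⟩ := exists_fiber (A := A) ((P.filter fun p => t p.1 = b).card)
        (P.filter fun p => t p.1 = b) (fun _ => 0) rfl
        (by rw [hScard b, h0, Nat.mul_zero]; simp)
      refine ⟨fun _ => 0, f, by simp [h0], fun _ _ => rfl, by omega, hf⟩
    · have hM : 0 < d * N b := Nat.mul_pos hd0 hpos
      obtain ⟨k, hk1, hk2, hk3⟩ := rounding (fun a => Q a b) (fun a => hQ.1 a b) (hQ.2 b)
        (d * N b) hM
      obtain ⟨f, hf⟩ := exists_fiber (A := A) ((P.filter fun p => t p.1 = b).card)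
        (P.filter fun p => t p.1 = b) k rfl (by rw [hScard b, hk1])
      exact ⟨k, f, hk1, hk2, fun _ => hk3, hf⟩
  choose k f hk1 hk2 hk3 hk4 using hkf
  set i0 : Fin d := ⟨0, hd0⟩ with hi0
  set t' : List (Fin d) → A := fun g =>
    if g.length ≤ n then t g
    else next^[g.length - (n+1)]
      (f (t ((g.take (n+1)).dropLast)) ((g.take (n+1)).dropLast, (g.take (n+1)).getLastD i0))
    with hdeft'
  have htlow : ∀ g : List (Fin d), g.length ≤ n → t' g = t g := by
    intro g h
    simp only [hdeft']
    rw [if_pos h]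
  have happ : ∀ (g : List (Fin d)) (i : Fin d), g.length = n → t' (g ++ [i]) = f (t g) (g, i) := by
    intro g i h
    have hlen : (g ++ [i]).length = n + 1 := by simp [h]
    simp only [hdeft']
    rw [if_neg (by omega), List.take_of_length_le (le_of_eq hlen), List.dropLast_concat,
      List.getLastD_concat, hlen]
    simp [h]
  have hhigh : ∀ g : List (Fin d), n + 1 ≤ g.length →
      t' g = next^[g.length - (n+1)]
        (f (t ((g.take (n+1)).dropLast))
          ((g.take (n+1)).dropLast, (g.take (n+1)).getLastD i0)) := by
    intro g h
    simp only [hdeft']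
    rw [if_neg (by omega)]
  have hfE : ∀ (g : List (Fin d)) (i : Fin d), g.length = n → 0 < E (f (t g) (g, i)) (t g) := by
    intro g i hg
    have hmem : (g, i) ∈ (P.filter fun p => t p.1 = t g).filter
        (fun p => f (t g) p = f (t g) (g, i)) := by
      refine Finset.mem_filter.2 ⟨Finset.mem_filter.2 ⟨(hmemP (g, i)).1 hg, rfl⟩, rfl⟩
    have hpos : 0 < k (t g) (f (t g) (g, i)) := by
      rw [← hk4 (t g) (f (t g) (g, i))]
      exact Finset.card_pos.2 ⟨(g, i), hmem⟩
    have hQne : Q (f (t g) (g, i)) (t g) ≠ 0 := by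
      intro h
      rw [hk2 (t g) _ h] at hpos
      omega
    have hEne : E (f (t g) (g, i)) (t g) ≠ 0 := fun h => hQne (htyp.1 _ _ h)
    exact lt_of_le_of_ne (hE.1 _ _) (Ne.symm hEne)
  have htX : ∀ g : List (Fin d), ∀ i : Fin d, 0 < E (t' (g ++ [i])) (t' g) := by
    intro g i
    rcases lt_trichotomy g.length n with hlt | heq | hgt
    · rw [htlow g (le_of_lt hlt), htlow (g ++ [i]) (by simp; omega)]
      exact ht g i
    · rw [htlow g (le_of_eq heq), happ g i heq]
      exact hfE g i heq
    · have h1 : n + 1 ≤ g.length := hgt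
      have h2 : n + 1 ≤ (g ++ [i]).length := by simp; omega
      rw [hhigh g h1, hhigh _ h2, List.take_append_of_le_length h1]
      have h4 : (g ++ [i]).length - (n+1) = (g.length - (n+1)) + 1 := by simp; omega
      rw [h4, Function.iterate_succ_apply']
      exact hnextp _
  set Q' : Matrix A A ℝ := fun a b =>
    if N b = 0 then E a b / ∑ c, E c b else (k b a : ℝ) / ((d : ℝ) * N b) with hQ'def
  have hQ'cs : (∀ a b, 0 ≤ Q' a b) ∧ ∀ b, ∑ a, Q' a b = 1 := by
    constructor
    · intro a b
      simp only [hQ'def]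
      split
      · exact div_nonneg (hE.1 a b) (le_of_lt (hE.2.1 b))
      · positivity
    · intro b
      rcases Nat.eq_zero_or_pos (N b) with h0 | hpos
      · simp only [hQ'def, if_pos h0]
        rw [← Finset.sum_div, div_self (ne_of_gt (hE.2.1 b))]
      · simp only [hQ'def, if_neg (by omega : ¬ N b = 0)]
        rw [← Finset.sum_div]
        have hcast : ∑ a, (k b a : ℝ) = ((d : ℝ) * N b) := by
          rw [← Nat.cast_sum, hk1 b]
          push_cast
          ring
        rw [hcast, div_self]
        have : (0:ℝ) < (d:ℝ) * N b := by
          have : (0:ℝ) < (N b : ℝ) := by exact_mod_cast hpos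
          positivity
        exact ne_of_gt this
  have hNt' : ∀ b, Nat.card {g : List (Fin d) // g.length = n ∧ t' g = b} = N b := by
    intro b
    rw [nat_card_subtype (LnF d n) (fun g => t' g = b) (fun g => g.length = n)
      (fun g => (mem_LnF g).symm), hN]
    simp only
    apply Finset.card_bij (fun g _ => g)
    · intro g hg
      rw [Finset.mem_filter] at hg ⊢
      exact ⟨hg.1, by rw [← htlow g (le_of_eq ((mem_LnF g).1 hg.1))]; exact hg.2⟩
    · intro g _ g' _ h; exact h
    · intro g hg
      rw [Finset.mem_filter] at hg
      exact ⟨g, Finset.mem_filter.2 ⟨hg.1, by rw [htlow g (le_of_eq ((mem_LnF g).1 hg.1))]; exact hg.2⟩, rfl⟩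
  have hpiv : pivec d n t' = v' := by
    funext b
    have h1 : pivec d n t' b = (N b : ℝ) / (d:ℝ)^n := by
      unfold pivec
      rw [hNt' b]
    rw [h1, ← hv'N b]
  have hlevel : ∀ a, Nat.card {g : List (Fin d) // g.length = n + 1 ∧ t' g = a}
      = (P.filter fun p => t' (p.1 ++ [p.2]) = a).card := by
    intro a
    rw [← nat_card_subtype P (fun p => t' (p.1 ++ [p.2]) = a) (fun p => p.1.length = n) hmemP]
    apply Nat.card_congr
    apply Equiv.symm
    refine Equiv.ofBijective
      (fun p => ⟨p.1.1 ++ [p.1.2], by simp [p.2.1], p.2.2⟩) ⟨?_, ?_⟩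
    · rintro ⟨⟨g, i⟩, hg, hc⟩ ⟨⟨g', i'⟩, hg', hc'⟩ h
      simp only [Subtype.mk.injEq] at h
      obtain ⟨h1, h2⟩ := List.append_inj h (by rw [hg, hg'])
      simp only [List.cons.injEq] at h2
      apply Subtype.ext
      simp [h1, h2.1]
    · rintro ⟨g, hg, hc⟩
      have hne : g ≠ [] := by
        intro h
        rw [h] at hg
        simp at hg
      refine ⟨⟨(g.dropLast, g.getLast hne), ?_, ?_⟩, ?_⟩
      · simp only [List.length_dropLast, hg]; rfl
      · rw [List.dropLast_append_getLast hne]; exact hc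
      · apply Subtype.ext
        simp only
        exact List.dropLast_append_getLast hne
  have hcount : ∀ a, (P.filter fun p => t' (p.1 ++ [p.2]) = a).card = ∑ b, k b a := by
    intro a
    rw [Finset.card_filter]
    have step : ∀ p ∈ P, (if t' (p.1 ++ [p.2]) = a then 1 else 0)
        = ∑ b, if t p.1 = b ∧ f b p = a then 1 else 0 := by
      intro p hp
      have hp1 : p.1.length = n := (hmemP p).2 hp
      have happ' : t' (p.1 ++ [p.2]) = f (t p.1) p := by
        rw [happ p.1 p.2 hp1]
      rw [happ']
      rw [Finset.sum_eq_single (t p.1)]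
      · simp
      · intro b _ hb
        rw [if_neg]
        rintro ⟨h1, -⟩
        exact hb h1.symm
      · intro h
        exact absurd (Finset.mem_univ _) h
    rw [Finset.sum_congr rfl step, Finset.sum_comm]
    apply Finset.sum_congr rfl
    intro b _
    rw [← Finset.card_filter, ← hk4 b a, Finset.filter_filter]
  have hpiv2 : pivec d (n + 1) t' = Q'.mulVec v' := by
    funext a
    have h1 : pivec d (n + 1) t' a = (∑ b, (k b a : ℝ)) / (d:ℝ)^(n+1) := by
      unfold pivec
      rw [hlevel a, hcount a]
      push_cast
      ring
    rw [h1]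
    have h2 : Q'.mulVec v' a = ∑ b, Q' a b * v' b := by
      simp [Matrix.mulVec, dotProduct]
    rw [h2, Finset.sum_div]
    apply Finset.sum_congr rfl
    intro b _
    rcases Nat.eq_zero_or_pos (N b) with h0 | hpos
    · have hk0 : k b a = 0 := by
        have hs := hk1 b
        rw [h0, Nat.mul_zero] at hs
        exact Finset.sum_eq_zero_iff.1 hs a (Finset.mem_univ a)
      have hvb : v' b = 0 := (hv0iff b).2 h0
      rw [hk0, hvb]
      simp
    · have hNpos : (0:ℝ) < (N b : ℝ) := by exact_mod_cast hpos
      simp only [hQ'def, if_neg (by omega : ¬ N b = 0)]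
      rw [hv'N b, pow_succ, div_mul_div_comm,
        div_eq_div_iff (by positivity) (by positivity)]
      ring
  have hQmat : Qmat d E n t' = Q' := by
    funext a b
    show (if Nat.card {g : List (Fin d) // g.length = n ∧ t' g = b} = 0 then
        E a b / ∑ c, E c b
      else
        (Nat.card {p : List (Fin d) × Fin d //
            p.1.length = n ∧ t' p.1 = b ∧ t' (p.1 ++ [p.2]) = a} : ℝ) /
          ((d : ℝ) * (Nat.card {g : List (Fin d) // g.length = n ∧ t' g = b} : ℝ))) = Q' a b
    rw [hNt' b]
    rcases Nat.eq_zero_or_pos (N b) with h0 | hpos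
    · rw [if_pos h0]
      simp only [hQ'def, if_pos h0]
    · rw [if_neg (by omega : ¬ N b = 0)]
      simp only [hQ'def, if_neg (by omega : ¬ N b = 0)]
      have hnum : Nat.card {p : List (Fin d) × Fin d //
          p.1.length = n ∧ t' p.1 = b ∧ t' (p.1 ++ [p.2]) = a} = k b a := by
        have h1 := nat_card_subtype P (fun p => t' p.1 = b ∧ t' (p.1 ++ [p.2]) = a)
          (fun p => p.1.length = n) hmemP
        rw [h1, ← hk4 b a, Finset.filter_filter]
        congr 1
        apply Finset.filter_congr
        intro p hp
        have hp1 : p.1.length = n := (hmemP p).2 hp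
        have e1 : t' p.1 = t p.1 := htlow p.1 (le_of_eq hp1)
        have e2 : t' (p.1 ++ [p.2]) = f (t p.1) p := by rw [happ p.1 p.2 hp1]
        rw [e1, e2]
        constructor
        · rintro ⟨h1, h2⟩
          exact ⟨h1, by rw [← h1]; exact h2⟩
        · rintro ⟨h1, h2⟩
          exact ⟨h1, by rw [h1]; exact h2⟩
      rw [hnum]
  refine ⟨Q', hQ'cs, ⟨t', htX, hpiv, hpiv2, hQmat⟩, ?_, ?_, ?_⟩
  · intro a b hQ0
    simp only [hQ'def]
    rcases Nat.eq_zero_or_pos (N b) with h0 | hpos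
    · rw [if_pos h0, ← htyp.2 a b ((hv0iff b).2 h0), hQ0]
    · rw [if_neg (by omega : ¬ N b = 0), hk2 b a hQ0]
      simp
  · intro a b hvb
    have h0 : N b = 0 := (hv0iff b).1 hvb
    simp only [hQ'def, if_pos h0]
    exact (htyp.2 a b hvb).symm
  · intro a b hvb
    have hpos : 0 < N b := by
      rcases Nat.eq_zero_or_pos (N b) with h | h
      · rw [(hv0iff b).2 h] at hvb
        exact absurd hvb (lt_irrefl 0)
      · exact h
    have hNpos : (0:ℝ) < (N b : ℝ) := by exact_mod_cast hpos
    simp only [hQ'def, if_neg (by omega : ¬ N b = 0)]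
    have herr := hk3 b hpos a
    have hM : (0:ℝ) < (d:ℝ) * N b := by positivity
    have hden : (d:ℝ)^(n+1) * v' b = (d:ℝ) * N b := by
      rw [hv'N b, pow_succ, ← mul_div_assoc, div_eq_iff (ne_of_gt hpow)]
      ring
    rw [hden]
    have hrw : Q a b - (k b a : ℝ)/((d:ℝ) * N b)
        = (((d * N b : ℕ) : ℝ) * Q a b - k b a)/((d:ℝ) * N b) := by
      rw [eq_div_iff (ne_of_gt hM), sub_mul, div_mul_cancel₀ _ (ne_of_gt hM)]
      push_cast
      ring
    rw [hrw, abs_div, abs_of_pos hM]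
    exact (div_le_div_iff_of_pos_right hM).2 herr
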